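/- Let (A_n) be the anti-recurrence sequence for a = (2,1) (the anti-Jacobsthal numbers, OEIS A304499). Then 0 ≤ A_n - 7n + 4 ≤ 3 for all n ≥ 1. -/
import Mathlib

namespace Stmt6Aux

/-- number of indices `i ≥ 1` with `f i ≤ M` (all such `i` lie in `[1,M]` when `i ≤ f i`). -/
def cnt (f : ℕ → ℕ) (M : ℕ) : ℕ := ((Finset.Icc 1 M).filter (fun i => f i ≤ M)).card

lemma id_le (f : ℕ → ℕ) (hf : StrictMonoOn f (Set.Ici 1)) (h1 : 1 ≤ f 1) :
    ∀ i, 1 ≤ i → i ≤ f i := by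
  intro i hi
  induction i with
  | zero => omega
  | succ k ih =>
    rcases Nat.eq_or_lt_of_le hi with h | h
    · rw [← h]; exact h1
    · have hk : 1 ≤ k := by omega
      have := hf (Set.mem_Ici.2 hk) (Set.mem_Ici.2 (by omega : (1:ℕ) ≤ k+1)) (by omega)
      have := ih hk
      omega

lemma cnt_le (f : ℕ → ℕ) (hf : StrictMonoOn f (Set.Ici 1)) (t M : ℕ)
    (h : M < f (t + 1)) : cnt f M ≤ t := by
  have hsub : (Finset.Icc 1 M).filter (fun i => f i ≤ M) ⊆ Finset.Icc 1 t := by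
    intro i hi
    simp only [Finset.mem_filter, Finset.mem_Icc] at hi ⊢
    refine ⟨hi.1.1, ?_⟩
    by_contra hc
    have hit : t + 1 ≤ i := by omega
    have : f (t+1) ≤ f i := hf.monotoneOn (by simp) (by simp; omega) hit
    omega
  calc cnt f M ≤ (Finset.Icc 1 t).card := Finset.card_le_card hsub
    _ = t := by simp

lemma cnt_ge (f : ℕ → ℕ) (hf : StrictMonoOn f (Set.Ici 1)) (h1 : 1 ≤ f 1) (t M : ℕ)
    (ht : 1 ≤ t) (h : f t ≤ M) : t ≤ cnt f M := by
  have hsub : Finset.Icc 1 t ⊆ (Finset.Icc 1 M).filter (fun i => f i ≤ M) := by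
    intro i hi
    simp only [Finset.mem_Icc] at hi
    have hfi : f i ≤ f t := by
      rcases Nat.eq_or_lt_of_le hi.2 with h' | h'
      · rw [h']
      · exact le_of_lt (hf (by simp [hi.1]) (by simp; omega) h')
    have hii : i ≤ f i := id_le f hf h1 i hi.1
    simp only [Finset.mem_filter, Finset.mem_Icc]
    omega
  calc t = (Finset.Icc 1 t).card := by simp
    _ ≤ _ := Finset.card_le_card hsub

lemma cnt_eq_values (f : ℕ → ℕ) (hf : StrictMonoOn f (Set.Ici 1)) (h1 : 1 ≤ f 1) (M : ℕ)
    [DecidablePred (fun m => ∃ i, 1 ≤ i ∧ f i = m)] :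
    cnt f M = ((Finset.Icc 1 M).filter (fun m => ∃ i, 1 ≤ i ∧ f i = m)).card := by
  apply Finset.card_bij (fun i _ => f i)
  · intro a ha
    simp only [Finset.mem_filter, Finset.mem_Icc] at ha ⊢
    have h1a : 1 ≤ f a := le_trans ha.1.1 (id_le f hf h1 a ha.1.1)
    exact ⟨⟨h1a, ha.2⟩, a, ha.1.1, rfl⟩
  · intro a ha b hb hab
    simp only [Finset.mem_filter, Finset.mem_Icc] at ha hb
    exact hf.injOn (Set.mem_Ici.2 ha.1.1) (Set.mem_Ici.2 hb.1.1) hab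
  · intro m hm
    simp only [Finset.mem_filter, Finset.mem_Icc] at hm
    obtain ⟨⟨hm1, hm2⟩, i, hi1, hi2⟩ := hm
    refine ⟨i, ?_, hi2⟩
    have := id_le f hf h1 i hi1
    simp only [Finset.mem_filter, Finset.mem_Icc]
    omega

lemma key (A B : ℕ → ℕ) (hA : StrictMonoOn A (Set.Ici 1)) (hB : StrictMonoOn B (Set.Ici 1))
    (hA1 : ∀ n, 1 ≤ n → 1 ≤ A n) (hB1 : ∀ n, 1 ≤ n → 1 ≤ B n)
    (hcomp : ∀ m, 1 ≤ m →
      ((∃ n, 1 ≤ n ∧ A n = m) ∧ ¬(∃ n, 1 ≤ n ∧ B n = m)) ∨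
      (¬(∃ n, 1 ≤ n ∧ A n = m) ∧ (∃ n, 1 ≤ n ∧ B n = m)))
    (M : ℕ) : cnt A M + cnt B M = M := by
  classical
  rw [cnt_eq_values A hA (hA1 1 le_rfl) M, cnt_eq_values B hB (hB1 1 le_rfl) M]
  have hflip : (Finset.Icc 1 M).filter (fun m => ∃ i, 1 ≤ i ∧ B i = m)
      = (Finset.Icc 1 M).filter (fun m => ¬ ∃ i, 1 ≤ i ∧ A i = m) := by
    apply Finset.filter_congr
    intro m hm
    simp only [Finset.mem_Icc] at hm
    rcases hcomp m hm.1 with ⟨h1, h2⟩ | ⟨h1, h2⟩ <;> simp [h1, h2]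
  rw [hflip, Finset.card_filter_add_card_filter_not]
  simp

end Stmt6Aux

/-- `A` and `B` (indexed from 1) are complementary strictly increasing sequences
of positive integers: every positive integer lies in exactly one of their ranges. -/
def CompPair (A B : ℕ → ℕ) : Prop :=
  StrictMonoOn A (Set.Ici 1) ∧ StrictMonoOn B (Set.Ici 1) ∧
  (∀ n, 1 ≤ n → 1 ≤ A n) ∧ (∀ n, 1 ≤ n → 1 ≤ B n) ∧
  ∀ m, 1 ≤ m →
    ((∃ n, 1 ≤ n ∧ A n = m) ∧ ¬(∃ n, 1 ≤ n ∧ B n = m)) ∨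
    (¬(∃ n, 1 ≤ n ∧ A n = m) ∧ (∃ n, 1 ≤ n ∧ B n = m))

/-- `(A, B)` is the anti-recurrence pair for the positive linear form `a` of dimension `k`:
`A n = Σ_{j=1}^k a_j * B_{(n-1)k+j}` for all `n ≥ 1`. -/
def AntiRec (k : ℕ) (a : Fin k → ℕ) (A B : ℕ → ℕ) : Prop :=
  CompPair A B ∧
  ∀ n, 1 ≤ n → A n = ∑ j : Fin k, a j * B ((n - 1) * k + (j : ℕ) + 1)

/-- Kimberling's bounds on the anti-Jacobsthal numbers: 0 ≤ A n - 7n + 4 ≤ 3. -/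
theorem stmt6 (A B : ℕ → ℕ) (h : AntiRec 2 ![2, 1] A B) :
    ∀ n, 1 ≤ n → 0 ≤ (A n : ℤ) - 7 * n + 4 ∧ (A n : ℤ) - 7 * n + 4 ≤ 3 := by
  open Stmt6Aux in
  obtain ⟨⟨hA, hB, hA1, hB1, hcomp⟩, hrec⟩ := h
  -- simplified recurrence
  have hrec' : ∀ n, 1 ≤ n → A n = 2 * B (2*n - 1) + B (2*n) := by
    intro n hn
    have := hrec n hn
    rw [Fin.sum_univ_two] at this
    simp only [Matrix.cons_val_zero, Matrix.cons_val_one, Matrix.head_cons, Fin.val_zero, Fin.val_one] at this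
    have e1 : (n - 1) * 2 + (0:ℕ) + 1 = 2*n - 1 := by omega
    have e2 : (n - 1) * 2 + (1:ℕ) + 1 = 2*n := by omega
    rw [e1] at this
    rw [show 2*n - 1 + 1 = 2*n from by omega] at this
    omega
  -- B j = j + cnt A (B j)
  have hBeq : ∀ j, 1 ≤ j → Stmt6Aux.cnt A (B j) + j = B j := by
    intro j hj
    have hk := Stmt6Aux.key A B hA hB hA1 hB1 hcomp (B j)
    have hcB : Stmt6Aux.cnt B (B j) = j := by
      apply le_antisymm
      · apply Stmt6Aux.cnt_le B hB
        exact hB (by simp [hj]) (by simp) (by omega)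
      · exact Stmt6Aux.cnt_ge B hB (hB1 1 le_rfl) j (B j) hj le_rfl
    omega
  have main : ∀ n, 1 ≤ n → 7*n ≤ A n + 4 ∧ A n + 1 ≤ 7*n := by
    intro n
    induction n using Nat.strong_induction_on with
    | _ n ih =>
      intro hn
      -- bounds on B j for j ≤ 2n
      have hT : ∀ j, 1 ≤ j → j ≤ 2*n → 7*j ≤ 6 * B j + 5 ∧ 6 * B j ≤ 7*j + 4 := by
        intro j hj hj2
        have hB2n1 : 1 ≤ B (2*n - 1) := hB1 _ (by omega)
        have hBjlt : B j < A n := by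
          have h1 : B j ≤ B (2*n) := by
            rcases Nat.eq_or_lt_of_le hj2 with h' | h'
            · rw [h']
            · exact le_of_lt (hB (by simp [hj]) (by simp; omega) h')
          have := hrec' n hn
          omega
        have hBe := hBeq j hj
        -- upper bound
        have hupper : 6 * B j ≤ 7*j + 4 := by
          set t := (B j + 4) / 7 with ht
          have hc : Stmt6Aux.cnt A (B j) ≤ t := by
            apply Stmt6Aux.cnt_le A hA
            rcases Nat.lt_or_ge (t+1) n with hlt | hge
            · have := ih (t+1) hlt (by omega)
              omega
            · have : A n ≤ A (t+1) := by
                rcases Nat.eq_or_lt_of_le hge with h' | h'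
                · rw [h']
                · exact le_of_lt (hA (by simp [hn]) (by simp) h')
              omega
          omega
        refine ⟨?_, hupper⟩
        -- lower bound
        set s := (B j + 1) / 7 with hs
        rcases Nat.eq_zero_or_pos s with h0 | hpos
        · omega
        · have hsn : s < n := by omega
          have hAs := ih s hsn hpos
          have hc : s ≤ Stmt6Aux.cnt A (B j) := by
            apply Stmt6Aux.cnt_ge A hA (hA1 1 le_rfl) s (B j) hpos
            omega
          omega
      have h1 := hT (2*n - 1) (by omega) (by omega)
      have h2 := hT (2*n) (by omega) (by omega)
      have := hrec' n hn
      omega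
  intro n hn
  have := main n hn
  omega
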